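/- Over a finite field F, for every constant ε > 0, the fraction of n^d × n^d matrices with PT-rank at most (1/2 − ε)n^d tends to 0 as n → ∞; i.e., asymptotically almost all n^d × n^d matrices over F have PT-rank at least (1/2 − ε)n^d. -/

import Mathlib

open Matrix BigOperators

/-- The `κ`-partial transpose of an `n^d × n^d` matrix (indexed by tuples in `[n]^d`). -/
def ptrans {F : Type*} [Field F] {n d : ℕ} (κ : Finset (Fin d))
    (M : Matrix (Fin d → Fin n) (Fin d → Fin n) F) :
    Matrix (Fin d → Fin n) (Fin d → Fin n) F :=
  fun i j => M (fun k => if k ∈ κ then j k else i k) (fun k => if k ∈ κ then i k else j k)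

/-- A matrix is PT-basic if some partial transpose of it has rank 1. -/
def IsPTBasic {F : Type*} [Field F] {n d : ℕ}
    (M : Matrix (Fin d → Fin n) (Fin d → Fin n) F) : Prop :=
  ∃ κ : Finset (Fin d), (ptrans κ M).rank = 1

/-- The PT-rank of `M`: the minimum number of PT-basic matrices summing to `M`. -/
noncomputable def PTrank {F : Type*} [Field F] {n d : ℕ}
    (M : Matrix (Fin d → Fin n) (Fin d → Fin n) F) : ℕ :=
  sInf { r | ∃ P : Fin r → Matrix (Fin d → Fin n) (Fin d → Fin n) F,
    (∀ i, IsPTBasic (P i)) ∧ M = ∑ i, P i }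
open Matrix

theorem fin_trunc_sum {M : Type*} [AddCommMonoid M] {r t : ℕ} (h : t ≤ r)
    (f : Fin t → M) (g : Fin r → M)
    (hfg : ∀ (i : Fin r) (hi : (i : ℕ) < t), g i = f ⟨i, hi⟩)
    (hg0 : ∀ i : Fin r, ¬((i : ℕ) < t) → g i = 0) :
    ∑ i, g i = ∑ j, f j := by
  classical
  obtain rfl | ht := Nat.eq_zero_or_pos t
  · rw [Finset.sum_eq_zero (fun i _ => hg0 i (by omega))]; simp
  rw [← Finset.sum_subset (Finset.filter_subset (fun i : Fin r => (i : ℕ) < t) Finset.univ)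
    (fun i _ hi => hg0 i (by simpa using hi))]
  refine Finset.sum_nbij' (fun i => if hi : (i : ℕ) < t then (⟨i, hi⟩ : Fin t) else ⟨0, ht⟩)
    (fun j => ⟨j, lt_of_lt_of_le j.2 h⟩) ?_ ?_ ?_ ?_ ?_
  · intro a _; exact Finset.mem_univ _
  · intro a _; simp [Finset.mem_filter, a.2]
  · intro a ha
    have := (Finset.mem_filter.mp ha).2
    simp [this]
  · intro a _; simp
  · intro a ha
    have hi := (Finset.mem_filter.mp ha).2
    rw [hfg a hi]
    simp [hi]

theorem rank_one_exists {F : Type*} [Field F] {m k : Type*} [Fintype m] [Fintype k] [DecidableEq k]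
    (A : Matrix m k F) (h : A.rank = 1) : ∃ u v, A = vecMulVec u v := by
  rw [Matrix.rank] at h
  obtain ⟨⟨w, hw⟩, hne, hall⟩ := (finrank_eq_one_iff' ).mp h
  choose c hc using fun j => hall ⟨A.mulVec (Pi.single j 1), LinearMap.mem_range_self _ _⟩
  refine ⟨w, c, ?_⟩
  ext i j
  have h2 := congrArg (fun x => x.1 i) (hc j)
  simp only [SetLike.mk_smul_mk, Pi.smul_apply, smul_eq_mul, mulVec_single, mul_one] at h2
  simpa [vecMulVec_apply, mul_comm] using h2.symm
open Matrix

theorem vecMulVec_mulVec' {F : Type*} [Field F] {m k : Type*} [Fintype k]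
    (u : m → F) (v : k → F) (x : k → F) :
    (vecMulVec u v).mulVec x = (v ⬝ᵥ x) • u := by
  ext i
  simp only [mulVec, dotProduct, vecMulVec_apply, Pi.smul_apply, smul_eq_mul, Finset.sum_mul]
  exact Finset.sum_congr rfl fun j _ => by ring

theorem rank_vecMulVec_ne {F : Type*} [Field F] {m k : Type*} [Fintype m] [Fintype k]
    [DecidableEq k] {u : m → F} {v : k → F} (hu : u ≠ 0) (hv : v ≠ 0) :
    (vecMulVec u v).rank = 1 := by
  have hr : LinearMap.range (vecMulVec u v).mulVecLin = Submodule.span F {u} := by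
    apply le_antisymm
    · rintro _ ⟨x, rfl⟩
      rw [mulVecLin_apply, vecMulVec_mulVec']
      exact Submodule.smul_mem _ _ (Submodule.mem_span_singleton_self u)
    · rw [Submodule.span_le, Set.singleton_subset_iff]
      obtain ⟨j, hj⟩ := Function.ne_iff.mp hv
      refine ⟨(v j)⁻¹ • (Pi.single j (1 : F) : k → F), ?_⟩
      rw [mulVecLin_apply, mulVec_smul, vecMulVec_mulVec']
      have hdp : v ⬝ᵥ Pi.single j 1 = v j := by
        simp [dotProduct, Pi.single_apply]
      rw [hdp, smul_smul, inv_mul_cancel₀ (by simpa using hj), one_smul]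
  rw [Matrix.rank, hr, finrank_span_singleton hu]

theorem ptrans_ptrans {F : Type*} [Field F] {n d : ℕ} (κ : Finset (Fin d))
    (M : Matrix (Fin d → Fin n) (Fin d → Fin n) F) : ptrans κ (ptrans κ M) = M := by
  funext i j
  show M _ _ = M i j
  congr 1 <;> funext k <;> by_cases h : k ∈ κ <;> simp [h]

theorem isPTBasic_structure {F : Type*} [Field F] {n d : ℕ}
    {M : Matrix (Fin d → Fin n) (Fin d → Fin n) F} (h : IsPTBasic M) :
    ∃ (κ : Finset (Fin d)) (u v : (Fin d → Fin n) → F), M = ptrans κ (vecMulVec u v) := by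
  obtain ⟨κ, hκ⟩ := h
  obtain ⟨u, v, huv⟩ := rank_one_exists _ hκ
  exact ⟨κ, u, v, by rw [← huv, ptrans_ptrans]⟩

theorem isPTBasic_stdBasisMatrix {F : Type*} [Field F] {n d : ℕ}
    (i j : Fin d → Fin n) {c : F} (hc : c ≠ 0) :
    IsPTBasic (Matrix.single i j c) := by
  refine ⟨∅, ?_⟩
  have he : ptrans (∅ : Finset (Fin d)) (Matrix.single i j c)
      = Matrix.single i j c := by
    funext a b; simp [ptrans]
  rw [he]
  have h1 : Matrix.single i j c = vecMulVec (Pi.single i c) (Pi.single j (1 : F)) := by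
    funext a b
    by_cases ha : i = a <;> by_cases hb : j = b <;>
      simp [Matrix.single, vecMulVec_apply, Pi.single_apply, ha, hb, eq_comm]
  rw [h1]
  refine rank_vecMulVec_ne (fun h => hc ?_) (fun h => (one_ne_zero : (1:F) ≠ 0) ?_)
  · simpa using congrFun h i
  · simpa using congrFun h j

theorem sum_over_finset_as_fin {α M : Type*} [AddCommMonoid M] (s : Finset α) (f : α → M) :
    ∃ g : Fin s.card → α, (∀ i, g i ∈ s) ∧ ∑ i, f (g i) = ∑ a ∈ s, f a := by
  refine ⟨fun i => s.equivFin.symm i, fun i => Finset.coe_mem _, ?_⟩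
  rw [Equiv.sum_comp s.equivFin.symm (fun x : s => f x), Finset.sum_coe_sort]

theorem decomp_nonempty {F : Type*} [Field F] {n d : ℕ}
    (M : Matrix (Fin d → Fin n) (Fin d → Fin n) F) :
    { r | ∃ P : Fin r → Matrix (Fin d → Fin n) (Fin d → Fin n) F,
      (∀ i, IsPTBasic (P i)) ∧ M = ∑ i, P i }.Nonempty := by
  classical
  obtain ⟨g, hg, hsum⟩ := sum_over_finset_as_fin
    (Finset.univ.filter (fun p : (Fin d → Fin n) × (Fin d → Fin n) => M p.1 p.2 ≠ 0))
    (fun p => Matrix.single p.1 p.2 (M p.1 p.2))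
  refine ⟨_, fun i => Matrix.single (g i).1 (g i).2 (M (g i).1 (g i).2), fun i => ?_, ?_⟩
  · exact isPTBasic_stdBasisMatrix _ _ (Finset.mem_filter.mp (hg i)).2
  · rw [hsum]
    funext a b
    rw [Matrix.sum_apply]
    rw [Finset.sum_eq_single (a, b)]
    · by_cases h : M a b = 0 <;> simp [h, Matrix.single]
    · intro p hp hne
      rcases p with ⟨p1, p2⟩
      have : ¬(p1 = a ∧ p2 = b) := by
        intro ⟨h1, h2⟩; exact hne (by rw [h1, h2])
      simp [Matrix.single, this]
    · intro hab
      have : M a b = 0 := by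
        by_contra h
        exact hab (Finset.mem_filter.mpr ⟨Finset.mem_univ _, h⟩)
      simp [this]

theorem card_PTrank_le {F : Type*} [Field F] [Fintype F] (n d r : ℕ) :
    Nat.card {M : Matrix (Fin d → Fin n) (Fin d → Fin n) F // PTrank M ≤ r} ≤
      (r + 1) * (2 ^ d * (Fintype.card F ^ n ^ d * Fintype.card F ^ n ^ d)) ^ r := by
  classical
  set E := Finset (Fin d) × ((Fin d → Fin n) → F) × ((Fin d → Fin n) → F) with hE
  set gfun : Fin (r + 1) × (Fin r → E) → Matrix (Fin d → Fin n) (Fin d → Fin n) F :=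
    fun ac => ∑ i : Fin r, if (i : ℕ) < (ac.1 : ℕ) then
      ptrans (ac.2 i).1 (vecMulVec (ac.2 i).2.1 (ac.2 i).2.2) else 0 with hgfun
  have hdec : ∀ X : {M : Matrix (Fin d → Fin n) (Fin d → Fin n) F // PTrank M ≤ r},
      ∃ ac : Fin (r + 1) × (Fin r → E), gfun ac = X.1 := by
    rintro ⟨M, hM⟩
    obtain ⟨P, hP, hsum⟩ := Nat.sInf_mem (decomp_nonempty M)
    choose κ u v hκuv using fun i => isPTBasic_structure (hP i)
    refine ⟨(⟨PTrank M, by omega⟩, fun i => if h : (i : ℕ) < PTrank M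
      then (κ ⟨i, h⟩, u ⟨i, h⟩, v ⟨i, h⟩) else (∅, 0, 0)), ?_⟩
    show (∑ i : Fin r, _) = M
    refine (fin_trunc_sum hM (fun j => P j) _ ?_ ?_).trans hsum.symm
    · intro i hi
      simp only [Fin.val_mk, hi, if_true, dif_pos hi]
      exact (hκuv ⟨i, hi⟩).symm
    · intro i hi
      simp only [Fin.val_mk, hi, if_false]
  have hinj : Function.Injective (fun X : {M : Matrix (Fin d → Fin n) (Fin d → Fin n) F //
      PTrank M ≤ r} => Classical.choose (hdec X)) := by
    intro X Y hxy
    have hx := Classical.choose_spec (hdec X)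
    have hy := Classical.choose_spec (hdec Y)
    apply Subtype.ext
    rw [← hx, ← hy]
    simp only at hxy
    rw [hxy]
  calc Nat.card {M : Matrix (Fin d → Fin n) (Fin d → Fin n) F // PTrank M ≤ r}
      ≤ Nat.card (Fin (r + 1) × (Fin r → E)) := Nat.card_le_card_of_injective _ hinj
    _ = (r + 1) * (2 ^ d * (Fintype.card F ^ n ^ d * Fintype.card F ^ n ^ d)) ^ r := by
        simp [hE, Nat.card_eq_fintype_card, Fintype.card_fun, Fintype.card_finset, mul_pow]

open Filter in
/-- Over a finite field `F`, for every constant `ε > 0` the fraction of `n^d × n^d`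
matrices with PT-rank at most `(1/2 − ε)·n^d` tends to `0` as `n → ∞`. -/
theorem stmt10 {F : Type*} [Field F] [Fintype F] (d : ℕ) (hd : 1 ≤ d)
    (ε : ℝ) (hε : 0 < ε) :
    Tendsto (fun n : ℕ =>
      (Nat.card {M : Matrix (Fin d → Fin n) (Fin d → Fin n) F //
          (PTrank M : ℝ) ≤ (1 / 2 - ε) * (n : ℝ) ^ d} : ℝ) /
        (Fintype.card F : ℝ) ^ (n ^ (2 * d)))
      atTop (nhds 0) := by
  classical
  set q := Fintype.card F with hqdef
  have hq : 2 ≤ q := Fintype.one_lt_card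
  have hq1 : (1 : ℝ) ≤ (q : ℝ) := by exact_mod_cast (by omega : 1 ≤ q)
  -- the natural truncation
  set r : ℕ → ℕ := fun n => ⌊(1 / 2 - ε) * (n : ℝ) ^ d⌋₊ with hrdef
  -- limit comparison function
  have hB : Tendsto (fun n : ℕ => (((n ^ d : ℕ) : ℝ) + 1) / 2 ^ (n ^ d)) atTop (nhds 0) := by
    have h1 : Tendsto (fun k : ℕ => ((k : ℝ) + 1) / 2 ^ k) atTop (nhds 0) := by
      have ha := tendsto_pow_const_div_const_pow_of_one_lt 1 (by norm_num : (1:ℝ) < 2)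
      have hb := tendsto_pow_const_div_const_pow_of_one_lt 0 (by norm_num : (1:ℝ) < 2)
      have := ha.add hb
      simp only [pow_one, pow_zero, add_zero] at this
      convert this using 2 with k
      ring
    have h2 : Tendsto (fun n : ℕ => n ^ d) atTop atTop :=
      tendsto_atTop_mono (fun n => Nat.le_self_pow (by omega) n) tendsto_id
    exact h1.comp h2
  -- eventual bound
  obtain ⟨m, hm⟩ := exists_nat_ge ((d + 1 : ℝ) / (2 * ε))
  have hev : ∀ n : ℕ, max 1 m ≤ n →
      (Nat.card {M : Matrix (Fin d → Fin n) (Fin d → Fin n) F //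
          (PTrank M : ℝ) ≤ (1 / 2 - ε) * (n : ℝ) ^ d} : ℝ) /
        (q : ℝ) ^ (n ^ (2 * d)) ≤ (((n ^ d : ℕ) : ℝ) + 1) / 2 ^ (n ^ d) := by
    intro n hn
    have hn1 : 1 ≤ n := le_trans (le_max_left _ _) hn
    have hnm : (m : ℝ) ≤ (n : ℝ) := by exact_mod_cast le_trans (le_max_right _ _) hn
    have hNr : (1 : ℝ) ≤ (n : ℝ) ^ d := one_le_pow₀ (by exact_mod_cast hn1)
    have hdN : (d + 1 : ℝ) ≤ 2 * ε * (n : ℝ) ^ d := by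
      have h1 : (d + 1 : ℝ) ≤ 2 * ε * m := by
        rw [div_le_iff₀ (by positivity)] at hm
        linarith [hm]
      have h2 : (m : ℝ) ≤ (n : ℝ) ^ d := by
        calc (m : ℝ) ≤ (n : ℝ) := hnm
          _ ≤ (n : ℝ) ^ d := le_self_pow₀ (by exact_mod_cast hn1) (by omega)
      nlinarith
    -- step 1: numerator card ≤ card with nat bound
    have hstep1 : Nat.card {M : Matrix (Fin d → Fin n) (Fin d → Fin n) F //
        (PTrank M : ℝ) ≤ (1 / 2 - ε) * (n : ℝ) ^ d} ≤
        Nat.card {M : Matrix (Fin d → Fin n) (Fin d → Fin n) F // PTrank M ≤ r n} := by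
      apply Nat.card_le_card_of_injective
        (fun X => (⟨X.1, Nat.le_floor X.2⟩ : {M : Matrix (Fin d → Fin n) (Fin d → Fin n) F //
          PTrank M ≤ r n}))
      intro X Y h
      simp only [Subtype.mk.injEq] at h
      exact Subtype.ext h
    -- step 2: r n ≤ n ^ d
    have hr1 : r n ≤ n ^ d := by
      have : (1 / 2 - ε) * (n : ℝ) ^ d ≤ ((n ^ d : ℕ) : ℝ) := by
        push_cast
        nlinarith
      calc r n ≤ ⌊((n ^ d : ℕ) : ℝ)⌋₊ := Nat.floor_mono this
        _ = n ^ d := Nat.floor_natCast _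
    -- step 3: exponent inequality
    have hkey : d * r n + 2 * r n * n ^ d + n ^ d ≤ n ^ (2 * d) := by
      have hpow : (n : ℝ) ^ (2 * d) = ((n : ℝ) ^ d) ^ 2 := by
        rw [← pow_mul, mul_comm]
      by_cases hc : (1 / 2 - ε : ℝ) < 0
      · have hr0 : r n = 0 := by
          rw [hrdef]
          apply Nat.floor_of_nonpos
          have : (0:ℝ) ≤ (n:ℝ)^d := by positivity
          nlinarith
        simp only [hr0, Nat.mul_zero, Nat.zero_mul, Nat.zero_add, mul_zero, zero_mul, zero_add]
        exact Nat.pow_le_pow_right (by omega) (by omega)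
      · push_neg at hc
        have hrr : (r n : ℝ) ≤ (1 / 2 - ε) * (n : ℝ) ^ d :=
          Nat.floor_le (by positivity)
        have : (d : ℝ) * r n + 2 * r n * (n : ℝ) ^ d + (n : ℝ) ^ d ≤ (n : ℝ) ^ (2 * d) := by
          rw [hpow]
          set N := (n : ℝ) ^ d
          nlinarith [mul_le_mul_of_nonneg_right hrr (le_trans zero_le_one hNr),
            mul_nonneg (le_of_lt hε) (le_trans zero_le_one hNr)]
        exact_mod_cast (by push_cast; exact this : ((d * r n + 2 * r n * n ^ d + n ^ d : ℕ) : ℝ)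
          ≤ ((n ^ (2 * d) : ℕ) : ℝ)) |> Nat.cast_le.mp
    -- step 4: nat chain
    have hnat : Nat.card {M : Matrix (Fin d → Fin n) (Fin d → Fin n) F //
        (PTrank M : ℝ) ≤ (1 / 2 - ε) * (n : ℝ) ^ d} * 2 ^ (n ^ d) ≤
        (n ^ d + 1) * q ^ (n ^ (2 * d)) := by
      calc Nat.card {M : Matrix (Fin d → Fin n) (Fin d → Fin n) F //
            (PTrank M : ℝ) ≤ (1 / 2 - ε) * (n : ℝ) ^ d} * 2 ^ (n ^ d)
          ≤ ((r n + 1) * (2 ^ d * (q ^ n ^ d * q ^ n ^ d)) ^ (r n)) * q ^ (n ^ d) := by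
            apply Nat.mul_le_mul
            · exact le_trans hstep1 (card_PTrank_le n d (r n))
            · exact Nat.pow_le_pow_left hq _
        _ ≤ ((n ^ d + 1) * (q ^ d * (q ^ n ^ d * q ^ n ^ d)) ^ (r n)) * q ^ (n ^ d) := by
            apply Nat.mul_le_mul_right
            apply Nat.mul_le_mul
            · omega
            · exact Nat.pow_le_pow_left (Nat.mul_le_mul_right _ (Nat.pow_le_pow_left hq _)) _
        _ = (n ^ d + 1) * q ^ ((d + (n ^ d + n ^ d)) * r n + n ^ d) := by
            rw [← pow_add, ← pow_add, ← pow_mul, mul_assoc, ← pow_add]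
        _ ≤ (n ^ d + 1) * q ^ (n ^ (2 * d)) := by
            apply Nat.mul_le_mul_left
            apply Nat.pow_le_pow_right (by omega)
            have := hkey
            nlinarith [hkey]
    -- conclude over ℝ
    have hQpos : (0 : ℝ) < (q : ℝ) ^ (n ^ (2 * d)) := by positivity
    have h2pos : (0 : ℝ) < (2 : ℝ) ^ (n ^ d) := by positivity
    rw [div_le_div_iff₀ hQpos h2pos]
    calc (Nat.card {M : Matrix (Fin d → Fin n) (Fin d → Fin n) F //
          (PTrank M : ℝ) ≤ (1 / 2 - ε) * (n : ℝ) ^ d} : ℝ) * 2 ^ (n ^ d)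
        = ((Nat.card {M : Matrix (Fin d → Fin n) (Fin d → Fin n) F //
          (PTrank M : ℝ) ≤ (1 / 2 - ε) * (n : ℝ) ^ d} * 2 ^ (n ^ d) : ℕ) : ℝ) := by push_cast; ring
      _ ≤ (((n ^ d + 1) * q ^ (n ^ (2 * d)) : ℕ) : ℝ) := by exact_mod_cast hnat
      _ = (((n ^ d : ℕ) : ℝ) + 1) * (q : ℝ) ^ (n ^ (2 * d)) := by push_cast; ring
  refine tendsto_of_tendsto_of_tendsto_of_le_of_le' tendsto_const_nhds hB ?_ ?_
  · exact Eventually.of_forall (fun n => by positivity)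
  · exact eventually_atTop.mpr ⟨max 1 m, hev⟩
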